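/- Let (Ω₁ × Ω₂, μ) be a finite correlated probability space such that every atom has μ(ω₁,ω₂) ≥ α or μ(ω₁,ω₂) = 0. Define the bipartite graph G on Ω₁ ∪ Ω₂ with an edge (a,b) whenever μ(a,b) > 0. If G is connected, then the maximal correlation satisfies ρ(Ω₁,Ω₂;μ) ≤ 1 − α²/2. -/

import Mathlib

/-- The bipartite graph on `Ω₁ ⊕ Ω₂` with an edge `(a,b)` whenever
`μ a b > 0`. -/
def bipartiteSupportGraph {Ω₁ Ω₂ : Type*} (μ : Ω₁ → Ω₂ → ℝ) :
    SimpleGraph (Ω₁ ⊕ Ω₂) where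
  Adj x y :=
    (∃ a b, x = Sum.inl a ∧ y = Sum.inr b ∧ 0 < μ a b) ∨
    (∃ a b, x = Sum.inr b ∧ y = Sum.inl a ∧ 0 < μ a b)
  symm := by
    constructor
    rintro x y (⟨a, b, rfl, rfl, h⟩ | ⟨a, b, rfl, rfl, h⟩)
    · exact Or.inr ⟨a, b, rfl, rfl, h⟩
    · exact Or.inl ⟨a, b, rfl, rfl, h⟩
  loopless := by
    constructor
    rintro x (⟨a, b, rfl, h, _⟩ | ⟨a, b, rfl, h, _⟩) <;> simp at h

lemma walk_abs_sub_le {V : Type*} {G : SimpleGraph V} (g : V → ℝ) :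
    ∀ {x y : V} (w : G.Walk x y),
      |g x - g y| ≤ (w.darts.map fun d => |g d.toProd.1 - g d.toProd.2|).sum := by
  intro x y w
  induction w with
  | nil => simp
  | @cons u v z h w ih =>
    simp only [SimpleGraph.Walk.darts_cons, List.map_cons, List.sum_cons]
    calc |g u - g z| ≤ |g u - g v| + |g v - g z| := abs_sub_le _ _ _
      _ ≤ |g u - g v| + _ := add_le_add_right ih _


/-- **Connected support implies bounded maximal correlation.**
Let `(Ω₁ × Ω₂, μ)` be a finite correlated probability space whose atoms all
satisfy `μ(ω₁,ω₂) ≥ α` or `μ(ω₁,ω₂) = 0`. If the bipartite support graph is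
connected, then for all `f₁, f₂` of mean `0` and variance `1`,
`Cov(f₁(ω₁), f₂(ω₂)) ≤ 1 − α²/2`; i.e. `ρ(Ω₁,Ω₂;μ) ≤ 1 − α²/2`. -/
theorem correlation_le_of_connected
    {Ω₁ Ω₂ : Type*} [Fintype Ω₁] [Fintype Ω₂]
    (μ : Ω₁ → Ω₂ → ℝ) (hnn : ∀ a b, 0 ≤ μ a b)
    (htot : ∑ a, ∑ b, μ a b = 1)
    (α : ℝ) (hα : 0 < α)
    (hatom : ∀ a b, μ a b = 0 ∨ α ≤ μ a b)
    (hconn : (bipartiteSupportGraph μ).Connected)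
    (f₁ : Ω₁ → ℝ) (f₂ : Ω₂ → ℝ)
    (hm₁ : ∑ a, ∑ b, μ a b * f₁ a = 0)
    (hm₂ : ∑ a, ∑ b, μ a b * f₂ b = 0)
    (hv₁ : ∑ a, ∑ b, μ a b * (f₁ a) ^ 2 = 1)
    (hv₂ : ∑ a, ∑ b, μ a b * (f₂ b) ^ 2 = 1) :
    ∑ a, ∑ b, μ a b * (f₁ a * f₂ b) ≤ 1 - α ^ 2 / 2 := by
  classical
  set G := bipartiteSupportGraph μ with hG
  set g : Ω₁ ⊕ Ω₂ → ℝ := Sum.elim f₁ f₂ with hg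
  set ν : Ω₁ ⊕ Ω₂ → ℝ := Sum.elim (fun a => ∑ b, μ a b) (fun b => ∑ a, μ a b) with hν
  -- basic facts about ν, g
  have hν_nonneg : ∀ x, 0 ≤ ν x := by
    rintro (a | b) <;> exact Finset.sum_nonneg fun _ _ => hnn _ _
  have hν_total : ∑ x, ν x = 2 := by
    rw [Fintype.sum_sum_type]
    simp only [hν, Sum.elim_inl, Sum.elim_inr]
    rw [htot, Finset.sum_comm, htot]; norm_num
  have hνg : ∑ x, ν x * g x = 0 := by
    rw [Fintype.sum_sum_type]
    simp only [hν, hg, Sum.elim_inl, Sum.elim_inr]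
    have e1 : ∑ a, (∑ b, μ a b) * f₁ a = 0 := by
      rw [← hm₁]; exact Finset.sum_congr rfl fun a _ => by rw [Finset.sum_mul]
    have e2 : ∑ b, (∑ a, μ a b) * f₂ b = 0 := by
      rw [← hm₂, Finset.sum_comm]
      exact Finset.sum_congr rfl fun b _ => by rw [Finset.sum_mul]
    rw [e1, e2]; norm_num
  have hνg2 : ∑ x, ν x * g x ^ 2 = 2 := by
    rw [Fintype.sum_sum_type]
    simp only [hν, hg, Sum.elim_inl, Sum.elim_inr]
    have e1 : ∑ a, (∑ b, μ a b) * f₁ a ^ 2 = 1 := by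
      rw [← hv₁]; exact Finset.sum_congr rfl fun a _ => by rw [Finset.sum_mul]
    have e2 : ∑ b, (∑ a, μ a b) * f₂ b ^ 2 = 1 := by
      rw [← hv₂, Finset.sum_comm]
      exact Finset.sum_congr rfl fun b _ => by rw [Finset.sum_mul]
    rw [e1, e2]; norm_num
  -- variance identity
  have hinner : ∀ x, ∑ y, ν x * ν y * (g x - g y) ^ 2
      = ν x * g x ^ 2 * (∑ y, ν y) - 2 * (ν x * g x) * (∑ y, ν y * g y)
        + ν x * (∑ y, ν y * g y ^ 2) := by
    intro x
    rw [Finset.mul_sum, Finset.mul_sum, Finset.mul_sum, ← Finset.sum_sub_distrib,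
      ← Finset.sum_add_distrib]
    exact Finset.sum_congr rfl fun y _ => by ring
  have hkey : ∑ x, ∑ y, ν x * ν y * (g x - g y) ^ 2 = 8 := by
    simp only [hinner, hν_total, hνg, hνg2]
    have h2 : ∀ x : Ω₁ ⊕ Ω₂, ν x * g x ^ 2 * 2 - 2 * (ν x * g x) * 0 + ν x * 2
        = 2 * (ν x * g x ^ 2) + 2 * ν x := fun x => by ring
    simp only [h2]
    rw [Finset.sum_add_distrib, ← Finset.mul_sum, ← Finset.mul_sum, hνg2, hν_total]
    norm_num
  -- existence of a far pair
  have hpair : ∃ x y : Ω₁ ⊕ Ω₂, 2 ≤ (g x - g y) ^ 2 := by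
    by_contra hcon
    push_neg at hcon
    have hlt : ∑ x, ∑ y, ν x * ν y * (g x - g y) ^ 2 < ∑ x, ∑ y, ν x * ν y * 2 := by
      obtain ⟨x0, hx0⟩ : ∃ x, 0 < ν x := by
        by_contra h; push_neg at h
        have : ∑ x, ν x ≤ 0 := Finset.sum_nonpos fun x _ => h x
        rw [hν_total] at this; linarith
      have hterm : ∀ x ∈ Finset.univ, (∑ y, ν x * ν y * (g x - g y) ^ 2) ≤ ∑ y, ν x * ν y * 2 := by
        intro x _
        refine Finset.sum_le_sum fun y _ => ?_
        have := mul_nonneg (hν_nonneg x) (hν_nonneg y)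
        nlinarith [hcon x y, sq_nonneg (g x - g y)]
      refine Finset.sum_lt_sum hterm ⟨x0, Finset.mem_univ _, ?_⟩
      refine Finset.sum_lt_sum (fun y _ => ?_) ⟨x0, Finset.mem_univ _, ?_⟩
      · have := mul_nonneg (hν_nonneg x0) (hν_nonneg y)
        nlinarith [hcon x0 y, sq_nonneg (g x0 - g y)]
      · have : (g x0 - g x0) ^ 2 = 0 := by ring
        rw [this]; nlinarith
    have hrhs : ∑ x, ∑ y, ν x * ν y * 2 = 8 := by
      have : ∑ x, ∑ y, ν x * ν y * 2 = (∑ x, ν x) * (∑ y, ν y) * 2 := by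
        rw [Finset.sum_mul, Finset.sum_mul]
        refine Finset.sum_congr rfl fun x _ => ?_
        rw [Finset.mul_sum, Finset.sum_mul]
      rw [this, hν_total]; ring
    rw [hkey, hrhs] at hlt; linarith
  obtain ⟨x, y, hxy⟩ := hpair
  have hne : x ≠ y := by
    intro h; subst h; simp only [sub_self] at hxy; norm_num at hxy
  -- every vertex has marginal at least α
  have hαν : ∀ z : Ω₁ ⊕ Ω₂, α ≤ ν z := by
    intro z
    have : Nontrivial (Ω₁ ⊕ Ω₂) := ⟨x, y, hne⟩
    obtain ⟨z', hz'⟩ := exists_ne z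
    obtain ⟨w0⟩ := hconn.preconnected z z'
    have hadj : ∃ w, G.Adj z w := by
      cases w0 with
      | nil => exact absurd rfl hz'
      | cons h _ => exact ⟨_, h⟩
    obtain ⟨w, hw⟩ := hadj
    rcases hw with ⟨a, b, hu, hv, h⟩ | ⟨a, b, hu, hv, h⟩
    · subst hu
      have hab : α ≤ μ a b := (hatom a b).resolve_left (by linarith)
      calc α ≤ μ a b := hab
        _ ≤ ∑ b', μ a b' :=
          Finset.single_le_sum (fun b' _ => hnn a b') (Finset.mem_univ b)
    · subst hu
      have hab : α ≤ μ a b := (hatom a b).resolve_left (by linarith)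
      calc α ≤ μ a b := hab
        _ ≤ ∑ a', μ a' b :=
          Finset.single_le_sum (fun a' _ => hnn a' b) (Finset.mem_univ a)
  have hcardV : α * (Fintype.card (Ω₁ ⊕ Ω₂) : ℝ) ≤ 2 := by
    have := Finset.card_nsmul_le_sum Finset.univ ν α (fun z _ => hαν z)
    rw [hν_total] at this
    rwa [nsmul_eq_mul, Finset.card_univ, mul_comm] at this
  -- the path between x and y
  obtain ⟨w0⟩ := hconn.preconnected x y
  set wp : G.Walk x y := (w0.toPath : G.Path x y).val with hwp
  have hp : wp.IsPath := (w0.toPath : G.Path x y).property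
  have hen : (wp.darts.map SimpleGraph.Dart.edge).Nodup := hp.isTrail.edges_nodup
  have hdn : wp.darts.Nodup := hen.of_map _
  have hℓ1 : 1 ≤ wp.length := by
    rcases Nat.eq_zero_or_pos wp.length with h | h
    · exact absurd (SimpleGraph.Walk.eq_of_length_eq_zero h) hne
    · exact h
  have hℓcard : wp.length < Fintype.card (Ω₁ ⊕ Ω₂) := hp.length_lt
  -- classify darts
  have hclass : ∀ d : G.Dart, ∃ ab : Ω₁ × Ω₂, 0 < μ ab.1 ab.2 ∧
      d.edge = s(Sum.inl ab.1, Sum.inr ab.2) ∧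
      |g d.toProd.1 - g d.toProd.2| = |f₁ ab.1 - f₂ ab.2| := by
    rintro ⟨⟨u, v⟩, hadj⟩
    rcases hadj with ⟨a, b, hu, hv, h⟩ | ⟨a, b, hu, hv, h⟩
    · obtain rfl : u = Sum.inl a := hu
      obtain rfl : v = Sum.inr b := hv
      exact ⟨(a, b), h, rfl, rfl⟩
    · obtain rfl : u = Sum.inr b := hu
      obtain rfl : v = Sum.inl a := hv
      exact ⟨(a, b), h, Sym2.eq_swap, abs_sub_comm _ _⟩
  choose E hE1 hE2 hE3 using hclass
  set s : Finset G.Dart := wp.darts.toFinset with hs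
  have hcard_s : (s.card : ℝ) = (wp.length : ℝ) := by
    rw [hs, List.toFinset_card_of_nodup hdn, SimpleGraph.Walk.length_darts]
  have hinj : Set.InjOn E ↑s := by
    intro d1 h1 d2 h2 he
    refine List.inj_on_of_nodup_map hen (List.mem_toFinset.mp h1) (List.mem_toFinset.mp h2) ?_
    rw [hE2 d1, hE2 d2, he]
  set T : ℝ := ∑ d ∈ s, (f₁ (E d).1 - f₂ (E d).2) ^ 2 with hT
  have hT0 : 0 ≤ T := Finset.sum_nonneg fun d _ => sq_nonneg _
  -- 2 ≤ length * T
  have h2T : 2 ≤ (wp.length : ℝ) * T := by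
    have habs := walk_abs_sub_le g wp
    have hlist : (wp.darts.map fun d => |g d.toProd.1 - g d.toProd.2|).sum
        = ∑ d ∈ s, |f₁ (E d).1 - f₂ (E d).2| := by
      rw [hs, List.sum_toFinset _ hdn]
      exact congrArg List.sum (List.map_congr_left fun d _ => hE3 d)
    rw [hlist] at habs
    have hcs := sq_sum_le_card_mul_sum_sq (s := s) (f := fun d => |f₁ (E d).1 - f₂ (E d).2|)
    have hsq : ∀ d, |f₁ (E d).1 - f₂ (E d).2| ^ 2 = (f₁ (E d).1 - f₂ (E d).2) ^ 2 :=
      fun d => sq_abs _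
    calc (2 : ℝ) ≤ (g x - g y) ^ 2 := hxy
      _ = |g x - g y| ^ 2 := (sq_abs _).symm
      _ ≤ (∑ d ∈ s, |f₁ (E d).1 - f₂ (E d).2|) ^ 2 := by
          apply pow_le_pow_left₀ (abs_nonneg _) habs
      _ ≤ (s.card : ℝ) * ∑ d ∈ s, |f₁ (E d).1 - f₂ (E d).2| ^ 2 := hcs
      _ = (wp.length : ℝ) * T := by
          rw [hcard_s, hT]
          congr 1
          exact Finset.sum_congr rfl fun d _ => hsq d
  -- α * T ≤ D
  have hDT : α * T ≤ ∑ a, ∑ b, μ a b * (f₁ a - f₂ b) ^ 2 := by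
    have hstep : α * T ≤ ∑ d ∈ s, μ (E d).1 (E d).2 * (f₁ (E d).1 - f₂ (E d).2) ^ 2 := by
      rw [hT, Finset.mul_sum]
      refine Finset.sum_le_sum fun d _ => ?_
      have hm : α ≤ μ (E d).1 (E d).2 := (hatom _ _).resolve_left (by have := hE1 d; linarith)
      exact mul_le_mul_of_nonneg_right hm (sq_nonneg _)
    have himg : ∑ d ∈ s, μ (E d).1 (E d).2 * (f₁ (E d).1 - f₂ (E d).2) ^ 2
        = ∑ ab ∈ s.image E, μ ab.1 ab.2 * (f₁ ab.1 - f₂ ab.2) ^ 2 :=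
      (Finset.sum_image (f := fun ab : Ω₁ × Ω₂ => μ ab.1 ab.2 * (f₁ ab.1 - f₂ ab.2) ^ 2)
        (fun d hd d' hd' => hinj hd hd')).symm
    have hsub : ∑ ab ∈ s.image E, μ ab.1 ab.2 * (f₁ ab.1 - f₂ ab.2) ^ 2
        ≤ ∑ ab : Ω₁ × Ω₂, μ ab.1 ab.2 * (f₁ ab.1 - f₂ ab.2) ^ 2 := by
      refine Finset.sum_le_sum_of_subset_of_nonneg (Finset.subset_univ _) ?_
      intro ab _ _
      exact mul_nonneg (hnn _ _) (sq_nonneg _)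
    have hprod : ∑ ab : Ω₁ × Ω₂, μ ab.1 ab.2 * (f₁ ab.1 - f₂ ab.2) ^ 2
        = ∑ a, ∑ b, μ a b * (f₁ a - f₂ b) ^ 2 :=
      Fintype.sum_prod_type (f := fun ab : Ω₁ × Ω₂ => μ ab.1 ab.2 * (f₁ ab.1 - f₂ ab.2) ^ 2)
    linarith [hstep, himg ▸ hstep, hsub, hprod ▸ hsub]
  -- arithmetic wrap-up
  have hα2D : α ^ 2 ≤ ∑ a, ∑ b, μ a b * (f₁ a - f₂ b) ^ 2 := by
    set L : ℝ := (wp.length : ℝ) with hL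
    have hL1 : (1 : ℝ) ≤ L := by rw [hL]; exact_mod_cast hℓ1
    have hLc : L + 1 ≤ (Fintype.card (Ω₁ ⊕ Ω₂) : ℝ) := by
      rw [hL]
      have : wp.length + 1 ≤ Fintype.card (Ω₁ ⊕ Ω₂) := hℓcard
      exact_mod_cast this
    have h3 : α * (L + 1) ≤ 2 :=
      le_trans (mul_le_mul_of_nonneg_left hLc hα.le) hcardV
    have p1 : α * 2 ≤ α * ((wp.length : ℝ) * T) := mul_le_mul_of_nonneg_left h2T hα.le
    have p2 : L * (α * T) ≤ L * (∑ a, ∑ b, μ a b * (f₁ a - f₂ b) ^ 2) :=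
      mul_le_mul_of_nonneg_left hDT (by linarith)
    rw [← hL] at p1
    nlinarith [p1, p2, h3, hL1, hT0, hα, mul_le_mul_of_nonneg_left h3 hα.le, mul_pos hα hα]
  -- convert to the covariance bound
  have hD2 : ∑ a, ∑ b, μ a b * (f₁ a - f₂ b) ^ 2
      = 2 - 2 * ∑ a, ∑ b, μ a b * (f₁ a * f₂ b) := by
    have hin : ∀ a, ∑ b, μ a b * (f₁ a - f₂ b) ^ 2
        = (∑ b, μ a b * f₁ a ^ 2) + (∑ b, μ a b * f₂ b ^ 2)
          - 2 * ∑ b, μ a b * (f₁ a * f₂ b) := by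
      intro a
      rw [Finset.mul_sum, ← Finset.sum_add_distrib, ← Finset.sum_sub_distrib]
      exact Finset.sum_congr rfl fun b _ => by ring
    simp only [hin]
    rw [Finset.sum_sub_distrib, Finset.sum_add_distrib, ← Finset.mul_sum, hv₁, hv₂]
    ring
  linarith [hα2D, hD2 ▸ hα2D]
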